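/- Let Π be a finite set of policies with known action-value functions Q^π for a reward r. Define the GPI policy by π^GPI(s) ∈ argmax_{a} max_{π∈Π} Q^π(s,a). Then for every state-action pair (s,a) and every π ∈ Π, the action-value function of π^GPI satisfies Q^{π^GPI}(s,a) ≥ Q^π(s,a). -/
import Mathlib


/-- Generalized policy improvement (GPI) guarantee. In a finite MDP,
given a finite nonempty set `Π` of deterministic policies whose action-value functions
`Q π` satisfy their respective Bellman equations, the GPI policy defined by
`π^GPI(s) ∈ argmax_a max_{π ∈ Π} Q π (s,a)` satisfies
`Q π^GPI (s,a) ≥ Q π (s,a)` for every `(s,a)` and every `π ∈ Π`. -/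
theorem gpi_improvement {S A : Type*} [Fintype S] [Fintype A]
    (P : S → A → S → ℝ) (hP0 : ∀ s a s', 0 ≤ P s a s')
    (hP1 : ∀ s a, ∑ s', P s a s' = 1)
    (r : S → A → S → ℝ) (γ : ℝ) (hγ0 : 0 ≤ γ) (hγ1 : γ < 1)
    (Q : (S → A) → S → A → ℝ)
    (hQ : ∀ (π : S → A) s a,
      Q π s a = ∑ s', P s a s' * (r s a s' + γ * Q π s' (π s')))
    (Pi : Finset (S → A)) (hne : Pi.Nonempty)
    (πGPI : S → A)
    (hGPI : ∀ s a, Pi.sup' hne (fun π => Q π s a) ≤ Pi.sup' hne (fun π => Q π s (πGPI s))) :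
    ∀ π ∈ Pi, ∀ s a, Q π s a ≤ Q πGPI s a := by
  intro π hπ s₀ a₀
  haveI : Nonempty S := ⟨s₀⟩
  haveI : Nonempty A := ⟨a₀⟩
  set Qmax : S → A → ℝ := fun s a => Pi.sup' hne (fun π => Q π s a) with hQmax
  set g : S × A → ℝ := fun p => Qmax p.1 p.2 - Q πGPI p.1 p.2 with hg
  set M : ℝ := Finset.univ.sup' Finset.univ_nonempty g with hMdef
  have hM : ∀ s a, Qmax s a - Q πGPI s a ≤ M := fun s a =>
    Finset.le_sup' g (Finset.mem_univ (s, a))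
  have key : ∀ s a, Qmax s a ≤ Q πGPI s a + γ * M := by
    intro s a
    apply Finset.sup'_le
    intro π' hπ'
    have step : ∀ s', Q π' s' (π' s') ≤ Q πGPI s' (πGPI s') + M := by
      intro s'
      have h1 : Q π' s' (π' s') ≤ Qmax s' (π' s') :=
        Finset.le_sup' (fun π => Q π s' (π' s')) hπ'
      have h2 : Qmax s' (π' s') ≤ Qmax s' (πGPI s') := hGPI s' (π' s')
      have h3 : Qmax s' (πGPI s') ≤ Q πGPI s' (πGPI s') + M := by
        have := hM s' (πGPI s')
        linarith
      linarith
    calc Q π' s a = ∑ s', P s a s' * (r s a s' + γ * Q π' s' (π' s')) := hQ π' s a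
      _ ≤ ∑ s', P s a s' * (r s a s' + γ * (Q πGPI s' (πGPI s') + M)) := by
          apply Finset.sum_le_sum
          intro s' _
          apply mul_le_mul_of_nonneg_left _ (hP0 s a s')
          have := step s'
          nlinarith
      _ = (∑ s', P s a s' * (r s a s' + γ * Q πGPI s' (πGPI s'))) +
            (∑ s', P s a s') * (γ * M) := by
          rw [Finset.sum_mul, ← Finset.sum_add_distrib]
          congr 1; ext s'; ring
      _ = Q πGPI s a + γ * M := by rw [hP1 s a, ← hQ πGPI s a, one_mul]
  have hMle : M ≤ γ * M := by
    rw [hMdef]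
    apply Finset.sup'_le
    rintro ⟨s, a⟩ _
    have := key s a
    simp only [hg]
    linarith
  have hM0 : M ≤ 0 := by nlinarith
  have h1 : Q π s₀ a₀ ≤ Qmax s₀ a₀ := Finset.le_sup' (fun π => Q π s₀ a₀) hπ
  have h2 := key s₀ a₀
  nlinarith
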